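/- Let A be an s×t Cauchy matrix over a field F with t ≤ s + r and r ≤ t. Then the code C = {c ∈ F^{s+r} : [A^T | (−I_r 0_{r×(t−r)})^T] c^T = 0} is MDS: it has length n = s+r, dimension k = s+r−t, and minimum distance n − k + 1 = t + 1. -/

import Mathlib

open Polynomial Finset



lemma cauchy_ker_zero {F : Type*} [Field F] [DecidableEq F] {s t : ℕ}
    (a : Fin s → F) (b : Fin t → F)
    (ha : Function.Injective a) (hb : Function.Injective b)
    (hab : ∀ i j, a i ≠ b j)
    (x : Fin s → F) (R : Finset (Fin t))
    (hcard : #{j | x j ≠ 0} ≤ #R)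
    (hz : ∀ i ∈ R, ∑ j, x j * (a j - b i)⁻¹ = 0) : x = 0 := by
  classical
  set Q : Finset (Fin s) := {j | x j ≠ 0} with hQ
  have hQmem : ∀ j, j ∈ Q ↔ x j ≠ 0 := by
    intro j; simp [hQ]
  by_cases hQe : Q = ∅
  · funext j
    by_contra h
    have := (hQmem j).2 h
    rw [hQe] at this
    simp at this
  set P : F[X] := ∑ j ∈ Q, C (x j) * ∏ k ∈ Q.erase j, (C (a k) - X) with hP
  have hlin : ∀ k : Fin s, (C (a k) - X).natDegree = 1 := fun k => by
    rw [show C (a k) - X = -(X - C (a k)) from by ring, natDegree_neg, natDegree_X_sub_C]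
  have hdeg : P.natDegree < #Q := by
    have h1 : ∀ j ∈ Q, (C (x j) * ∏ k ∈ Q.erase j, (C (a k) - X)).natDegree ≤ #Q - 1 := by
      intro j hj
      calc (C (x j) * ∏ k ∈ Q.erase j, (C (a k) - X)).natDegree
          ≤ (C (x j)).natDegree + (∏ k ∈ Q.erase j, (C (a k) - X)).natDegree :=
            natDegree_mul_le
        _ ≤ 0 + ∑ k ∈ Q.erase j, (C (a k) - X).natDegree := by
            gcongr
            · exact le_of_eq (natDegree_C _)
            · exact natDegree_prod_le _ _
        _ = ∑ k ∈ Q.erase j, 1 := by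
            rw [zero_add]; exact Finset.sum_congr rfl fun k _ => hlin k
        _ = #(Q.erase j) := by simp
        _ = #Q - 1 := by rw [Finset.card_erase_of_mem hj]
    have h2 : P.natDegree ≤ #Q - 1 := natDegree_sum_le_of_forall_le _ _ h1
    have h3 : 1 ≤ #Q := Finset.card_pos.2 (Finset.nonempty_iff_ne_empty.2 hQe)
    omega
  have heval : ∀ i ∈ R, P.eval (b i) = 0 := by
    intro i hi
    have hprod_ne : ∀ k ∈ Q, a k - b i ≠ 0 := fun k _ => sub_ne_zero.2 (hab k i)
    have hkey : P.eval (b i) = (∏ k ∈ Q, (a k - b i)) * ∑ j, x j * (a j - b i)⁻¹ := by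
      rw [hP]
      simp only [eval_finset_sum, eval_mul, eval_C, eval_prod, eval_sub, eval_X]
      have hsum : ∑ j, x j * (a j - b i)⁻¹ = ∑ j ∈ Q, x j * (a j - b i)⁻¹ := by
        rw [Finset.sum_filter_of_ne]
        intro j _ h
        intro hx
        rw [hx, zero_mul] at h
        exact h rfl
      rw [hsum, Finset.mul_sum]
      apply Finset.sum_congr rfl
      intro j hj
      rw [← Finset.mul_prod_erase Q (fun k => a k - b i) hj]
      have hne : a j - b i ≠ 0 := hprod_ne j hj
      field_simp
    rw [hkey, hz i hi, mul_zero]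
  have hPzero : P = 0 := by
    apply Polynomial.eq_zero_of_natDegree_lt_card_of_eval_eq_zero' P (R.image b)
    · intro v hv
      obtain ⟨i, hi, rfl⟩ := Finset.mem_image.1 hv
      exact heval i hi
    · rw [Finset.card_image_of_injective R hb]
      exact hdeg.trans_le hcard
  have hxQ : ∀ j ∈ Q, x j = 0 := by
    intro j hj
    have h1 : P.eval (a j) = x j * ∏ k ∈ Q.erase j, (a k - a j) := by
      rw [hP]
      simp only [eval_finset_sum, eval_mul, eval_C, eval_prod, eval_sub, eval_X]
      rw [Finset.sum_eq_single j]
      · intro j' hj' hne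
        apply mul_eq_zero_of_right
        apply Finset.prod_eq_zero (Finset.mem_erase.2 ⟨Ne.symm hne, hj⟩)
        ring
      · intro h; exact absurd hj h
    have h2 : (∏ k ∈ Q.erase j, (a k - a j)) ≠ 0 := by
      apply Finset.prod_ne_zero_iff.2
      intro k hk
      exact sub_ne_zero.2 fun h => (Finset.mem_erase.1 hk).1 (ha h)
    have h3 : x j * ∏ k ∈ Q.erase j, (a k - a j) = 0 := by
      rw [← h1, hPzero, eval_zero]
    exact (mul_eq_zero.1 h3).resolve_right h2
  exfalso
  obtain ⟨j, hj⟩ := Finset.nonempty_iff_ne_empty.2 hQe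
  exact (hQmem j).1 hj (hxQ j hj)



/-- Minimum distance: a codeword of weight at most `t` is zero. -/
lemma stack_min_dist {F : Type*} [Field F] [DecidableEq F] {s t r : ℕ}
    (hst : t - s < r) (hrt : r ≤ t)
    (a : Fin s → F) (b : Fin t → F)
    (ha : Function.Injective a) (hb : Function.Injective b)
    (hab : ∀ i j, a i ≠ b j)
    (M : Matrix (Fin t) (Fin s ⊕ Fin r) F)
    (hM : ∀ i z, M i z = Sum.elim (fun j => (a j - b i)⁻¹)
      (fun j : Fin r => if (i : ℕ) = (j : ℕ) then (-1 : F) else 0) z)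
    (c : Fin s ⊕ Fin r → F) (hc : M.mulVec c = 0) (hw : hammingNorm c ≤ t) :
    c = 0 := by
  classical
  set x : Fin s → F := fun j => c (Sum.inl j) with hx
  set y : Fin r → F := fun j => c (Sum.inr j) with hy
  have hrow : ∀ i : Fin t,
      (∑ j, (a j - b i)⁻¹ * x j) +
      (∑ j : Fin r, (if (i : ℕ) = (j : ℕ) then (-1 : F) else 0) * y j) = 0 := by
    intro i
    have h0 := congrFun hc i
    rw [Matrix.mulVec, dotProduct, Fintype.sum_sum_type] at h0
    simpa [hM] using h0
  have hsecond : ∀ i : Fin t,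
      (∑ j : Fin r, (if (i : ℕ) = (j : ℕ) then (-1 : F) else 0) * y j) =
      (if h : (i : ℕ) < r then -y ⟨i, h⟩ else 0) := by
    intro i
    by_cases h : (i : ℕ) < r
    · rw [dif_pos h, Finset.sum_eq_single (⟨(i : ℕ), h⟩ : Fin r)]
      · simp
      · intro j _ hne
        rw [if_neg, zero_mul]
        intro hv
        exact hne (by ext; exact hv.symm)
      · intro hm; exact absurd (Finset.mem_univ _) hm
    · rw [dif_neg h]
      apply Finset.sum_eq_zero
      intro j _
      rw [if_neg, zero_mul]
      intro hv
      have := j.isLt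
      omega
  set R : Finset (Fin t) :=
    univ.filter (fun i : Fin t => (if h : (i : ℕ) < r then -y ⟨i, h⟩ else 0) = 0) with hR
  have hr0 : 0 < r := by omega
  -- cardinality of the complement of R
  have hcompl : #(univ.filter (fun i : Fin t =>
      ¬ (if h : (i : ℕ) < r then -y ⟨i, h⟩ else 0) = 0)) ≤ #{j | y j ≠ 0} := by
    apply Finset.card_le_card_of_injOn
      (fun i : Fin t => if h : (i : ℕ) < r then (⟨i, h⟩ : Fin r) else ⟨0, hr0⟩)
    · intro i hi
      simp only [Finset.mem_coe, Finset.mem_filter, Finset.mem_univ, true_and] at hi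
      beta_reduce
      by_cases h : (i : ℕ) < r
      · rw [dif_pos h] at hi ⊢
        simp only [Finset.mem_coe, Finset.mem_filter, Finset.mem_univ, true_and]
        intro h0
        exact hi (by rw [h0, neg_zero])
      · rw [dif_neg h] at hi
        exact absurd rfl hi
    · intro i1 h1 i2 h2 heq
      simp only [Finset.coe_filter, Set.mem_setOf_eq, Finset.mem_univ, true_and] at h1 h2
      have hl1 : (i1 : ℕ) < r := by by_contra h; rw [dif_neg h] at h1; exact h1 rfl
      have hl2 : (i2 : ℕ) < r := by by_contra h; rw [dif_neg h] at h2; exact h2 rfl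
      simp only [dif_pos hl1, dif_pos hl2] at heq
      have : (i1 : ℕ) = (i2 : ℕ) := congrArg Fin.val (α := Fin r) heq
      exact Fin.ext this
  have hsplit : hammingNorm c = #{j | x j ≠ 0} + #{j | y j ≠ 0} := by
    unfold hammingNorm
    rw [Finset.card_filter, Fintype.sum_sum_type,
      ← Finset.card_filter, ← Finset.card_filter]
  have hRcard : #{j | x j ≠ 0} ≤ #R := by
    have h1 := Finset.card_filter_add_card_filter_not
      (s := (univ : Finset (Fin t)))
      (p := fun i : Fin t => (if h : (i : ℕ) < r then -y ⟨i, h⟩ else 0) = 0)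
    rw [Finset.card_univ, Fintype.card_fin, ← hR] at h1
    omega
  have hxz : x = 0 := by
    apply cauchy_ker_zero a b ha hb hab x R hRcard
    intro i hi
    have h1 := hrow i
    rw [hsecond i] at h1
    have h2 : (if h : (i : ℕ) < r then -y ⟨i, h⟩ else 0) = 0 := by
      simpa [hR] using hi
    rw [h2, add_zero] at h1
    rw [← h1]
    exact Finset.sum_congr rfl fun j _ => mul_comm _ _
  have hyz : ∀ j : Fin r, y j = 0 := by
    intro j
    have hjt : (j : ℕ) < t := lt_of_lt_of_le j.isLt hrt
    have h1 := hrow ⟨j, hjt⟩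
    rw [hsecond ⟨j, hjt⟩] at h1
    have h2 : (∑ j', (a j' - b ⟨(j : ℕ), hjt⟩)⁻¹ * x j') = 0 := by
      apply Finset.sum_eq_zero
      intro j' _
      rw [show x j' = 0 from congrFun hxz j', mul_zero]
    rw [h2, zero_add, dif_pos (show ((⟨(j : ℕ), hjt⟩ : Fin t) : ℕ) < r from j.isLt)] at h1
    simpa using h1
  funext w
  cases w with
  | inl j => exact congrFun hxz j
  | inr j => exact hyz j


section emb
variable {F : Type*} [Field F] {n t : ℕ} {β : Type*} [Fintype β] [DecidableEq β]

lemma emb_mulVec (M : Matrix (Fin t) β F) (e : Fin n → β) (z : Fin n → F) :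
    M.mulVec (fun w => ∑ j, if e j = w then z j else 0) =
      fun i => ∑ j, M i (e j) * z j := by
  funext i
  rw [Matrix.mulVec, dotProduct]
  simp only [Finset.mul_sum, mul_ite, mul_zero]
  rw [Finset.sum_comm]
  exact Finset.sum_congr rfl fun j _ => by rw [Finset.sum_ite_eq]; simp

set_option linter.unusedSectionVars false in
lemma emb_apply' [DecidableEq F] (e : Fin n → β) (he : Function.Injective e)
    (z : Fin n → F) (j : Fin n) :
    (fun w => ∑ j', if e j' = w then z j' else 0) (e j) = z j := by
  simp [he.eq_iff]

lemma emb_norm [DecidableEq F] (e : Fin n → β) (z : Fin n → F) :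
    hammingNorm (fun w => ∑ j, if e j = w then z j else 0) ≤ n := by
  unfold hammingNorm
  calc #({w | (∑ j, if e j = w then z j else 0) ≠ 0} : Finset β)
      ≤ #(univ.image e) := by
        apply Finset.card_le_card
        intro w hw
        simp only [Finset.mem_filter, Finset.mem_univ, true_and] at hw
        by_contra hmem
        apply hw
        apply Finset.sum_eq_zero
        intro j _
        rw [if_neg]
        intro hej
        exact hmem (hej ▸ Finset.mem_image_of_mem e (Finset.mem_univ j))
    _ ≤ #(univ : Finset (Fin n)) := Finset.card_image_le
    _ = n := by simp
end emb

/-- Lemma 1: the code with parity-check matrix `M = [A ; (-I_r | 0)]ᵀ`, where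
`A` is an `s × t` Cauchy matrix and `t - s < r ≤ t`, is an MDS code of length
`s + r`, dimension `s + r - t`, and minimum Hamming distance `t + 1`. -/
theorem cauchy_stack_code_is_MDS {F : Type*} [Field F] [Fintype F] [DecidableEq F]
    (s t r : ℕ) (hst : t - s < r) (hrt : r ≤ t)
    (a : Fin s → F) (b : Fin t → F)
    (ha : Function.Injective a) (hb : Function.Injective b)
    (hab : ∀ i j, a i ≠ b j)
    (A : Matrix (Fin s) (Fin t) F)
    (hA : ∀ i j, A i j = (a i - b j)⁻¹)
    (M : Matrix (Fin t) (Fin s ⊕ Fin r) F)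
    (hM : ∀ i z, M i z = Sum.elim (fun j => A j i)
      (fun j : Fin r => if (i : ℕ) = (j : ℕ) then (-1 : F) else 0) z) :
    Module.finrank F ↥(LinearMap.ker M.mulVecLin) = s + r - t ∧
    (∀ c : Fin s ⊕ Fin r → F, M.mulVec c = 0 → c ≠ 0 → t + 1 ≤ hammingNorm c) ∧
    (∃ c : Fin s ⊕ Fin r → F, M.mulVec c = 0 ∧ c ≠ 0 ∧ hammingNorm c = t + 1) := by
  classical
  have hM' : ∀ i z, M i z = Sum.elim (fun j => (a j - b i)⁻¹)
      (fun j : Fin r => if (i : ℕ) = (j : ℕ) then (-1 : F) else 0) z := by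
    intro i z
    rw [hM]
    cases z with
    | inl j => simp [hA]
    | inr j => rfl
  have hmd : ∀ c : Fin s ⊕ Fin r → F, M.mulVec c = 0 → hammingNorm c ≤ t → c = 0 :=
    fun c hc hw => stack_min_dist hst hrt a b ha hb hab M hM' c hc hw
  have htsr : t < s + r := by omega
  -- the distance lower bound (second conjunct), proved first
  have hdist : ∀ c : Fin s ⊕ Fin r → F, M.mulVec c = 0 → c ≠ 0 → t + 1 ≤ hammingNorm c := by
    intro c hc hcne
    by_contra h
    push_neg at h
    exact hcne (hmd c hc (by omega))
  refine ⟨?_, hdist, ?_⟩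
  · -- dimension
    set e : Fin t → Fin s ⊕ Fin r := fun j => finSumFinEquiv.symm (Fin.castLE htsr.le j)
      with he_def
    have he : Function.Injective e :=
      fun a b h => Fin.castLE_injective _ (finSumFinEquiv.symm.injective h)
    set N : Matrix (Fin t) (Fin t) F := Matrix.of fun i j => M i (e j) with hN
    have hNker : ∀ z : Fin t → F, N.mulVec z = 0 → z = 0 := by
      intro z hz
      set c : Fin s ⊕ Fin r → F := fun w => ∑ j, if e j = w then z j else 0 with hc_def
      have h1 : M.mulVec c = 0 := by
        rw [hc_def, emb_mulVec]
        funext i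
        have h2 := congrFun hz i
        rw [Matrix.mulVec, dotProduct] at h2
        simpa [hN] using h2
      have h3 : c = 0 := hmd c h1 (by rw [hc_def]; exact emb_norm e z)
      funext j
      have := emb_apply' e he z j
      rw [← hc_def] at this
      rw [← this, h3]
      rfl
    have hNinj : Function.Injective N.mulVecLin := by
      intro z1 z2 h
      have h0 : N.mulVecLin (z1 - z2) = 0 := by rw [map_sub, h, sub_self]
      rw [Matrix.mulVecLin_apply] at h0
      have := hNker _ h0
      exact sub_eq_zero.1 this
    have hNsurj : Function.Surjective N.mulVecLin :=
      (LinearMap.injective_iff_surjective).1 hNinj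
    have hsurj : Function.Surjective M.mulVecLin := by
      intro v
      obtain ⟨z, hz⟩ := hNsurj v
      refine ⟨fun w => ∑ j, if e j = w then z j else 0, ?_⟩
      rw [Matrix.mulVecLin_apply, emb_mulVec]
      funext i
      have h2 := congrFun hz i
      rw [Matrix.mulVecLin_apply, Matrix.mulVec, dotProduct] at h2
      simpa [hN] using h2
    have h1 := LinearMap.finrank_range_add_finrank_ker M.mulVecLin
    rw [LinearMap.range_eq_top.2 hsurj, finrank_top] at h1
    rw [Module.finrank_pi, Module.finrank_pi, Fintype.card_sum, Fintype.card_fin,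
      Fintype.card_fin, Fintype.card_fin] at h1
    omega
  · -- existence of a weight-(t+1) codeword
    have ht1 : t + 1 ≤ s + r := by omega
    set e : Fin (t + 1) → Fin s ⊕ Fin r := fun j => finSumFinEquiv.symm (Fin.castLE ht1 j)
      with he_def
    have he : Function.Injective e :=
      fun a b h => Fin.castLE_injective _ (finSumFinEquiv.symm.injective h)
    set N : Matrix (Fin t) (Fin (t + 1)) F := Matrix.of fun i j => M i (e j) with hN
    have hnotinj : ¬ Function.Injective N.mulVecLin := by
      intro h
      have h2 := LinearMap.finrank_le_finrank_of_injective h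
      rw [Module.finrank_pi, Module.finrank_pi, Fintype.card_fin, Fintype.card_fin] at h2
      omega
    obtain ⟨z1, z2, hz12, hzne⟩ := Function.not_injective_iff.1 hnotinj
    set z : Fin (t + 1) → F := z1 - z2 with hz_def
    have hz0 : N.mulVecLin z = 0 := by rw [hz_def, map_sub, hz12, sub_self]
    have hzne0 : z ≠ 0 := sub_ne_zero.2 hzne
    set c : Fin s ⊕ Fin r → F := fun w => ∑ j, if e j = w then z j else 0 with hc_def
    have h1 : M.mulVec c = 0 := by
      rw [hc_def, emb_mulVec]
      funext i
      have h2 := congrFun hz0 i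
      rw [Matrix.mulVecLin_apply, Matrix.mulVec, dotProduct] at h2
      simpa [hN] using h2
    have hcne : c ≠ 0 := by
      obtain ⟨j, hj⟩ := Function.ne_iff.1 hzne0
      intro h
      apply hj
      have h2 := emb_apply' e he z j
      rw [← hc_def] at h2
      rw [← h2, h]
      rfl
    have hle : hammingNorm c ≤ t + 1 := by rw [hc_def]; exact emb_norm e z
    exact ⟨c, h1, hcne, le_antisymm hle (hdist c h1 hcne)⟩
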